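/- Define u₁ᵉ = ε·sin(1/ε) and u₂ᵉ = −2 + 3ε, and τ(ε) = e^(u₁ᵉ/ε) − e^(u₂ᵉ/ε). Then τ(ε) > 0 for all sufficiently small ε > 0 and lim_{ε→0⁺} ε·ln τ(ε) = 0, even though lim_{ε→0⁺}(u₁ᵉ − 0)/ε = sin(1/ε) has no limit as ε → 0⁺. -/

import Mathlib

open Filter Real

lemma tau_bounds (ε : ℝ) (hε : ε ∈ Set.Ioo (0:ℝ) (1/4)) :
    Real.exp (-1) - Real.exp (-2) ≤
      Real.exp (ε * Real.sin (1 / ε) / ε) - Real.exp ((-2 + 3 * ε) / ε) ∧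
    Real.exp (ε * Real.sin (1 / ε) / ε) - Real.exp ((-2 + 3 * ε) / ε) ≤ Real.exp 1 := by
  obtain ⟨h0, h4⟩ := hε
  have hne : ε ≠ 0 := ne_of_gt h0
  rw [mul_comm, mul_div_assoc, div_self hne, mul_one]
  have hs1 : Real.sin (1 / ε) ≤ 1 := Real.sin_le_one _
  have hsm1 : -1 ≤ Real.sin (1 / ε) := Real.neg_one_le_sin _
  have hle : (-2 + 3 * ε) / ε ≤ -2 := by
    rw [div_le_iff₀ h0]
    nlinarith
  have h1 : Real.exp ((-2 + 3 * ε) / ε) ≤ Real.exp (-2) := Real.exp_le_exp.2 hle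
  have h2 : Real.exp (-1) ≤ Real.exp (Real.sin (1 / ε)) := Real.exp_le_exp.2 hsm1
  have h3 : Real.exp (Real.sin (1 / ε)) ≤ Real.exp 1 := Real.exp_le_exp.2 hs1
  have h5 : 0 < Real.exp ((-2 + 3 * ε) / ε) := Real.exp_pos _
  constructor <;> linarith

theorem stmt_7 :
    let u₁ : ℝ → ℝ := fun ε => ε * Real.sin (1 / ε)
    let u₂ : ℝ → ℝ := fun ε => -2 + 3 * ε
    let τ : ℝ → ℝ := fun ε => Real.exp (u₁ ε / ε) - Real.exp (u₂ ε / ε)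
    (∃ β' > (0 : ℝ), ∀ ε ∈ Set.Ioo (0 : ℝ) β', 0 < τ ε) ∧
    Tendsto (fun ε => ε * Real.log (τ ε)) (nhdsWithin 0 (Set.Ioi 0)) (nhds 0) ∧
    ¬ ∃ L : ℝ, Tendsto (fun ε : ℝ => Real.sin (1 / ε)) (nhdsWithin 0 (Set.Ioi 0)) (nhds L) := by
  intro u₁ u₂ τ
  have hc : (0:ℝ) < Real.exp (-1) - Real.exp (-2) := by
    have := Real.exp_lt_exp.2 (show (-2:ℝ) < -1 by norm_num)
    linarith
  refine ⟨⟨1/4, by norm_num, fun ε hε => ?_⟩, ?_, ?_⟩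
  · have := (tau_bounds ε hε).1
    simp only [τ, u₁, u₂]
    linarith
  · -- squeeze
    have hmem : Set.Ioo (0:ℝ) (1/4) ∈ nhdsWithin (0:ℝ) (Set.Ioi 0) :=
      Ioo_mem_nhdsGT (by norm_num)
    have hlow : Tendsto (fun ε : ℝ => ε * Real.log (Real.exp (-1) - Real.exp (-2)))
        (nhdsWithin 0 (Set.Ioi 0)) (nhds 0) := by
      have : Tendsto (fun ε : ℝ => ε * Real.log (Real.exp (-1) - Real.exp (-2)))
          (nhds 0) (nhds (0 * Real.log (Real.exp (-1) - Real.exp (-2)))) :=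
        (continuous_id.mul continuous_const).tendsto 0
      simpa using this.mono_left nhdsWithin_le_nhds
    have hhigh : Tendsto (fun ε : ℝ => ε * 1) (nhdsWithin 0 (Set.Ioi 0)) (nhds 0) := by
      have : Tendsto (fun ε : ℝ => ε * 1) (nhds 0) (nhds ((0:ℝ) * 1)) :=
        (continuous_id.mul continuous_const).tendsto 0
      simpa using this.mono_left nhdsWithin_le_nhds
    refine tendsto_of_tendsto_of_tendsto_of_le_of_le' hlow hhigh ?_ ?_
    · filter_upwards [hmem] with ε hε
      obtain ⟨hb1, hb2⟩ := tau_bounds ε hε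
      have hτpos : (0:ℝ) < τ ε := by simp only [τ, u₁, u₂]; linarith
      have hlog : Real.log (Real.exp (-1) - Real.exp (-2)) ≤ Real.log (τ ε) :=
        Real.log_le_log hc (by simpa only [τ, u₁, u₂] using hb1)
      exact mul_le_mul_of_nonneg_left hlog (le_of_lt hε.1)
    · filter_upwards [hmem] with ε hε
      obtain ⟨hb1, hb2⟩ := tau_bounds ε hε
      have hτpos : (0:ℝ) < τ ε := by simp only [τ, u₁, u₂]; linarith
      have hlog : Real.log (τ ε) ≤ 1 := by
        have := Real.log_le_log hτpos (show τ ε ≤ Real.exp 1 by simpa only [τ, u₁, u₂] using hb2)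
        simpa [Real.log_exp] using this
      exact mul_le_mul_of_nonneg_left hlog (le_of_lt hε.1)
  · rintro ⟨L, hL⟩
    have hπ := Real.pi_pos
    have key : ∀ c : ℝ, Tendsto (fun n : ℕ => 1 / (c + n * (2 * Real.pi))) atTop
        (nhdsWithin 0 (Set.Ioi 0)) := by
      intro c
      have h : Tendsto (fun n : ℕ => c + n * (2 * Real.pi)) atTop atTop := by
        apply tendsto_atTop_add_const_left
        exact Tendsto.atTop_mul_const (by positivity) tendsto_natCast_atTop_atTop
      rw [tendsto_nhdsWithin_iff]
      constructor
      · simpa [one_div, Pi.inv_def] using h.inv_tendsto_atTop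
      · filter_upwards [h.eventually_gt_atTop 0] with n hn
        exact one_div_pos.2 hn
    have lim : ∀ c : ℝ, (0 < c) →
        Tendsto (fun n : ℕ => Real.sin (c + n * (2 * Real.pi))) atTop (nhds L) := by
      intro c hcpos
      have h := hL.comp (key c)
      have heq : (fun n : ℕ => Real.sin (1 / (1 / (c + n * (2 * Real.pi)))))
          = fun n : ℕ => Real.sin (c + n * (2 * Real.pi)) := by
        funext n
        have : c + (n:ℝ) * (2 * Real.pi) > 0 := by positivity
        rw [one_div_one_div]
      rw [← heq]
      exact h
    have h1 : Tendsto (fun n : ℕ => Real.sin (Real.pi / 2 + n * (2 * Real.pi))) atTop (nhds L) :=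
      lim (Real.pi / 2) (by positivity)
    have h2 : Tendsto (fun n : ℕ => Real.sin (Real.pi + n * (2 * Real.pi))) atTop (nhds L) :=
      lim Real.pi hπ
    have e1 : (fun n : ℕ => Real.sin (Real.pi / 2 + n * (2 * Real.pi))) = fun _ : ℕ => (1:ℝ) := by
      funext n; rw [Real.sin_add_nat_mul_two_pi, Real.sin_pi_div_two]
    have e2 : (fun n : ℕ => Real.sin (Real.pi + n * (2 * Real.pi))) = fun _ : ℕ => (0:ℝ) := by
      funext n; rw [Real.sin_add_nat_mul_two_pi, Real.sin_pi]
    rw [e1] at h1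
    rw [e2] at h2
    have := tendsto_nhds_unique h1 tendsto_const_nhds
    have := tendsto_nhds_unique h2 tendsto_const_nhds
    linarith
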